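/- Let G = (V, E, w) be a finite weighted directed graph with integer weights where every vertex has out-degree at least one, and let x ∈ ℕ. Suppose there exists an infinite path (v₀, v₁, v₂, …) starting at v₀ such that for all n ∈ ℕ, x + Σ_{i=0}^{n-1} w(v_i, v_{i+1}) ≥ 0. Then the path contains a vertex v_m and an index m such that the energy level never drops below its level at step m afterwards; formally, there exists m ∈ ℕ such that for all n ≥ m, Σ_{i=m}^{n-1} w(v_i, v_{i+1}) ≥ 0. -/

import Mathlib

/-- along an infinite path whose prefix sums plus an initial
energy `x` stay non-negative, there is a moment `m` after which the energy
level never drops below its level at step `m`. -/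
theorem stmt_5 {V : Type*} [Fintype V] (E : V → V → Prop) (w : V → V → ℤ)
    (hE : ∀ v : V, ∃ u, E v u) (x : ℕ)
    (p : ℕ → V) (hp : ∀ i, E (p i) (p (i + 1)))
    (hx : ∀ n : ℕ, 0 ≤ (x : ℤ) + ∑ i ∈ Finset.range n, w (p i) (p (i + 1))) :
    ∃ m : ℕ, ∀ n : ℕ, m ≤ n →
      0 ≤ ∑ i ∈ Finset.Ico m n, w (p i) (p (i + 1)) := by
  set S : ℕ → ℤ := fun n => ∑ i ∈ Finset.range n, w (p i) (p (i + 1)) with hS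
  set f : ℕ → ℕ := fun n => ((x : ℤ) + S n).toNat with hf
  have key : ∀ n, (f n : ℤ) = (x : ℤ) + S n := fun n => Int.toNat_of_nonneg (hx n)
  obtain ⟨m, hm⟩ : ∃ m, ∀ n, f m ≤ f n := by
    exact ⟨Function.argmin f, fun n => Function.argmin_le f n⟩
  refine ⟨m, fun n hn => ?_⟩
  have h1 : S n - S m = ∑ i ∈ Finset.Ico m n, w (p i) (p (i + 1)) := by
    rw [hS]
    rw [Finset.sum_Ico_eq_sub _ hn]
  have h2 : (f m : ℤ) ≤ f n := by exact_mod_cast hm n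
  rw [key, key] at h2
  linarith
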